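/- Let μ be a probability measure on [0,1] and let (v_k)_{k≥1} be a (finite or infinite) sequence of points in [0,1]. Then there exists a sequence (x_k)_{k≥1} in [0,1] such that for every N ≥ 2 (with N at most the length of the sequence in the finite case), the empirical measures satisfy D*_N(μ; (1/N)Σ_{i=1}^N δ_{x_i}) ≤ D*_N(λ; (1/N)Σ_{i=1}^N δ_{v_i}), where λ is Lebesgue measure on [0,1]. -/

import Mathlib

open MeasureTheory Set Filter
open scoped ENNReal Classical

/-- The empirical measure `ν_N = (1/N) ∑_{i=1}^N δ_{x_i}` of the first `N` terms of a
sequence in `[0,1] ⊆ ℝ`. -/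
noncomputable def emp1 (N : ℕ) (x : ℕ → ℝ) : Measure ℝ :=
  (N : ℝ≥0∞)⁻¹ • ∑ i ∈ Finset.range N, Measure.dirac (x i)

/-- The one-dimensional star-discrepancy
`D*(μ;ν) = sup_{0 ≤ b ≤ 1} |μ([0,b)) − ν([0,b))|`. -/
noncomputable def starDisc (μ ν : Measure ℝ) : ℝ :=
  ⨆ b : Icc (0 : ℝ) 1, |(μ (Ico 0 ↑b)).toReal - (ν (Ico 0 ↑b)).toReal|

lemma emp1_apply_Ico (N : ℕ) (x : ℕ → ℝ) (hx : ∀ k, 0 ≤ x k) (b : ℝ) :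
    (emp1 N x (Ico 0 b)).toReal
      = (((Finset.range N).filter (fun i => x i < b)).card : ℝ) / N := by
  have h1 : (∑ i ∈ Finset.range N, Measure.dirac (x i)) (Ico 0 b)
      = (((Finset.range N).filter (fun i => x i < b)).card : ℝ≥0∞) := by
    rw [Measure.finset_sum_apply, ← Finset.sum_boole]
    refine Finset.sum_congr rfl fun i _ => ?_
    rw [Measure.dirac_apply' _ measurableSet_Ico]
    by_cases h : x i < b <;> simp [Set.indicator, h, hx i]
  have h2 : emp1 N x (Ico 0 b)
      = (N : ℝ≥0∞)⁻¹ * (((Finset.range N).filter (fun i => x i < b)).card : ℝ≥0∞) := by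
    rw [emp1, Measure.smul_apply, h1, smul_eq_mul]
  rw [h2, ENNReal.toReal_mul, ENNReal.toReal_inv, ENNReal.toReal_natCast,
    ENNReal.toReal_natCast, inv_mul_eq_div]

/-- Let `μ` be a probability measure on `[0,1]` and `(v_k)` a sequence of points of
`[0,1]`. Then there is a sequence `(x_k)` in `[0,1]` such that for every `N ≥ 2` the
star-discrepancy of `(x_k)` with respect to `μ` is at most the Lebesgue star-discrepancy
of `(v_k)`. -/
theorem stmt10 (μ : Measure ℝ) [IsProbabilityMeasure μ]
    (hμ : μ ((Icc (0 : ℝ) 1)ᶜ) = 0)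
    (v : ℕ → ℝ) (hv : ∀ k, v k ∈ Icc (0 : ℝ) 1) :
    ∃ x : ℕ → ℝ, (∀ k, x k ∈ Icc (0 : ℝ) 1) ∧
      ∀ N : ℕ, 2 ≤ N →
        starDisc μ (emp1 N x) ≤
          starDisc (volume.restrict (Icc (0 : ℝ) 1)) (emp1 N v) := by
  haveI : Nonempty (Icc (0:ℝ) 1) := ⟨⟨0, le_refl 0, zero_le_one⟩⟩
  -- null sets outside [0,1]
  have hIio0 : μ (Iio (0:ℝ)) = 0 := by
    apply measure_mono_null _ hμ
    intro y hy
    simp only [mem_compl_iff, mem_Icc, not_and_or, not_le]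
    exact Or.inl hy
  have hIoi1 : μ (Ioi (1:ℝ)) = 0 := by
    apply measure_mono_null _ hμ
    intro y hy
    simp only [mem_compl_iff, mem_Icc, not_and_or, not_le]
    exact Or.inr hy
  -- the CDF
  set F : ℝ → ℝ := fun t => (μ (Iic t)).toReal with hF
  have hFmono : Monotone F := fun a b hab =>
    ENNReal.toReal_mono (measure_ne_top μ _) (measure_mono (Iic_subset_Iic.2 hab))
  have hF1 : F 1 = 1 := by
    have h := measure_add_measure_compl (μ := μ) (measurableSet_Iic (a := (1:ℝ)))
    rw [compl_Iic, hIoi1, add_zero, measure_univ] at h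
    simp [hF, h]
  -- the quantile function
  set S : ℝ → Set ℝ := fun u => {t : ℝ | t ∈ Icc (0:ℝ) 1 ∧ u ≤ F t} with hSdef
  set Q : ℝ → ℝ := fun u => sInf (S u) with hQdef
  have hS1 : ∀ u ∈ Icc (0:ℝ) 1, (1:ℝ) ∈ S u := fun u hu =>
    ⟨⟨zero_le_one, le_refl 1⟩, by rw [hF1]; exact hu.2⟩
  have hSbdd : ∀ u, BddBelow (S u) := fun u => ⟨0, fun t ht => ht.1.1⟩
  have hQmem : ∀ u ∈ Icc (0:ℝ) 1, Q u ∈ Icc (0:ℝ) 1 := fun u hu =>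
    ⟨le_csInf ⟨1, hS1 u hu⟩ (fun t ht => ht.1.1), csInf_le (hSbdd u) (hS1 u hu)⟩
  -- key property: u ≤ F (Q u)
  have hFQ : ∀ u ∈ Icc (0:ℝ) 1, u ≤ F (Q u) := by
    intro u hu
    have key : ∀ n : ℕ, ENNReal.ofReal u ≤ μ (Iic (Q u + ((n:ℝ)+1)⁻¹)) := by
      intro n
      obtain ⟨t, htS, htlt⟩ := Real.lt_sInf_add_pos (s := S u) ⟨1, hS1 u hu⟩
        (ε := ((n:ℝ)+1)⁻¹) (by positivity)
      calc ENNReal.ofReal u ≤ μ (Iic t) := ENNReal.ofReal_le_of_le_toReal htS.2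
        _ ≤ μ (Iic (Q u + ((n:ℝ)+1)⁻¹)) := measure_mono (Iic_subset_Iic.2 htlt.le)
    have hInter : ⋂ n : ℕ, Iic (Q u + ((n:ℝ)+1)⁻¹) = Iic (Q u) := by
      ext y
      simp only [mem_iInter, mem_Iic]
      constructor
      · intro h
        by_contra hy
        push_neg at hy
        obtain ⟨n, hn⟩ := exists_nat_one_div_lt (show (0:ℝ) < y - Q u by linarith)
        rw [one_div] at hn
        have := h n
        linarith
      · intro h n
        have : (0:ℝ) ≤ ((n:ℝ)+1)⁻¹ := by positivity
        linarith
    have hanti : Antitone (fun n : ℕ => Iic (Q u + ((n:ℝ)+1)⁻¹)) := by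
      intro m n hmn
      apply Iic_subset_Iic.2
      have : ((n:ℝ)+1)⁻¹ ≤ ((m:ℝ)+1)⁻¹ := by
        apply inv_anti₀ (by positivity)
        exact_mod_cast add_le_add_left (Nat.cast_le.2 hmn) 1
      linarith
    have htend := tendsto_measure_iInter_atTop (μ := μ)
      (fun n => measurableSet_Iic.nullMeasurableSet) hanti ⟨0, measure_ne_top μ _⟩
    rw [hInter] at htend
    have hle : ENNReal.ofReal u ≤ μ (Iic (Q u)) :=
      ge_of_tendsto htend (Eventually.of_forall key)
    have := ENNReal.toReal_mono (measure_ne_top μ _) hle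
    rwa [ENNReal.toReal_ofReal hu.1] at this
  -- claim (i)
  have claimI : ∀ b : ℝ, ∀ u ∈ Icc (0:ℝ) 1, b ≤ 1 →
      u < (μ (Iio b)).toReal → Q u < b := by
    intro b u hu hb1 hub
    have hb0 : 0 < b := by
      by_contra hbneg
      push_neg at hbneg
      have h0 : μ (Iio b) = 0 := measure_mono_null (Iio_subset_Iio hbneg) hIio0
      rw [h0] at hub
      simp only [ENNReal.toReal_zero] at hub
      linarith [hu.1]
    have hUnion : ⋃ n : ℕ, Iic (b - ((n:ℝ)+1)⁻¹) = Iio b := by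
      ext y
      simp only [mem_iUnion, mem_Iic, mem_Iio]
      constructor
      · rintro ⟨n, hn⟩
        have : (0:ℝ) < ((n:ℝ)+1)⁻¹ := by positivity
        linarith
      · intro h
        obtain ⟨n, hn⟩ := exists_nat_one_div_lt (show (0:ℝ) < b - y by linarith)
        rw [one_div] at hn
        exact ⟨n, by linarith⟩
    have hmono : Monotone (fun n : ℕ => Iic (b - ((n:ℝ)+1)⁻¹)) := by
      intro m n hmn
      apply Iic_subset_Iic.2
      have : ((n:ℝ)+1)⁻¹ ≤ ((m:ℝ)+1)⁻¹ := by
        apply inv_anti₀ (by positivity)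
        exact_mod_cast add_le_add_left (Nat.cast_le.2 hmn) 1
      linarith
    have htend := tendsto_measure_iUnion_atTop (μ := μ) hmono
    rw [hUnion] at htend
    have hlt : ENNReal.ofReal u < μ (Iio b) :=
      (ENNReal.ofReal_lt_iff_lt_toReal hu.1 (measure_ne_top μ _)).2 hub
    obtain ⟨n, hn⟩ := (htend.eventually_const_lt hlt).exists
    set t : ℝ := b - ((n:ℝ)+1)⁻¹ with ht
    have htb : t < b := by
      have : (0:ℝ) < ((n:ℝ)+1)⁻¹ := by positivity
      simp only [ht]; linarith
    have hut : u ≤ F (max t 0) := by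
      have h1 : ENNReal.ofReal u ≤ μ (Iic (max t 0)) :=
        le_trans hn.le (measure_mono (Iic_subset_Iic.2 (le_max_left _ _)))
      have := ENNReal.toReal_mono (measure_ne_top μ _) h1
      rwa [ENNReal.toReal_ofReal hu.1] at this
    have hmem : max t 0 ∈ S u :=
      ⟨⟨le_max_right _ _, max_le (htb.le.trans hb1) zero_le_one⟩, hut⟩
    exact lt_of_le_of_lt (csInf_le (hSbdd u) hmem) (max_lt htb hb0)
  -- claim (ii)
  have claimII : ∀ b : ℝ, ∀ u ∈ Icc (0:ℝ) 1, Q u < b → u ≤ (μ (Iio b)).toReal := by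
    intro b u hu hQb
    refine le_trans (hFQ u hu) ?_
    exact ENNReal.toReal_mono (measure_ne_top μ _)
      (measure_mono (fun y (hy : y ≤ Q u) => lt_of_le_of_lt hy hQb))
  -- μ (Ico 0 b) = μ (Iio b) for b ≥ 0
  have hIco : ∀ b : ℝ, 0 ≤ b → μ (Ico 0 b) = μ (Iio b) := by
    intro b hb
    apply le_antisymm (measure_mono (fun y hy => hy.2))
    calc μ (Iio b) ≤ μ (Ico 0 b ∪ Iio 0) := by
          apply measure_mono
          intro y hy
          rcases le_or_gt 0 y with h | h
          · exact Or.inl ⟨h, hy⟩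
          · exact Or.inr h
      _ ≤ μ (Ico 0 b) + μ (Iio 0) := measure_union_le _ _
      _ = μ (Ico 0 b) := by rw [hIio0, add_zero]
  -- the sequence
  refine ⟨fun k => Q (v k), fun k => hQmem _ (hv k), ?_⟩
  intro N hN
  have hNpos : (0:ℝ) < N := by positivity
  -- counts
  set cx : ℝ → ℕ := fun b => ((Finset.range N).filter (fun i => Q (v i) < b)).card with hcx
  set cv : ℝ → ℕ := fun c => ((Finset.range N).filter (fun i => v i < c)).card with hcv
  set cv' : ℝ → ℕ := fun c => ((Finset.range N).filter (fun i => v i ≤ c)).card with hcv'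
  have hEmpx : ∀ b : ℝ, (emp1 N (fun k => Q (v k)) (Ico 0 b)).toReal = cx b / N := by
    intro b
    rw [emp1_apply_Ico N _ (fun k => (hQmem _ (hv k)).1) b]
  have hEmpv : ∀ c : ℝ, (emp1 N v (Ico 0 c)).toReal = cv c / N := by
    intro c
    rw [emp1_apply_Ico N v (fun k => (hv k).1) c]
  have hLeb : ∀ c : ℝ, c ∈ Icc (0:ℝ) 1 →
      ((volume.restrict (Icc (0:ℝ) 1)) (Ico 0 c)).toReal = c := by
    intro c hc
    rw [Measure.restrict_apply measurableSet_Ico]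
    have : Ico (0:ℝ) c ∩ Icc 0 1 = Ico 0 c := by
      apply inter_eq_left.2
      intro y hy
      exact ⟨hy.1, hy.2.le.trans hc.2⟩
    rw [this, Real.volume_Ico, sub_zero, ENNReal.toReal_ofReal hc.1]
  -- bounds on counts
  have hcvle : ∀ c : ℝ, (cv c : ℝ) / N ≤ 1 := by
    intro c
    rw [div_le_one hNpos]
    exact_mod_cast (Finset.card_filter_le _ _).trans (Finset.card_range N).le
  -- D and its properties
  set D := starDisc (volume.restrict (Icc (0:ℝ) 1)) (emp1 N v) with hD
  have hbdd : BddAbove (Set.range (fun b : Icc (0:ℝ) 1 =>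
      |((volume.restrict (Icc (0:ℝ) 1)) (Ico 0 ↑b)).toReal - (emp1 N v (Ico 0 ↑b)).toReal|)) := by
    refine ⟨1, ?_⟩
    rintro r ⟨b, rfl⟩
    dsimp only
    rw [hLeb _ b.2, hEmpv]
    have h1 := b.2.1
    have h2 := b.2.2
    have h3 := hcvle (b : ℝ)
    have h4 : (0:ℝ) ≤ (cv (b:ℝ) : ℝ) / N := by positivity
    rw [abs_le]
    constructor <;> linarith
  have hDle : ∀ c : ℝ, c ∈ Icc (0:ℝ) 1 → |c - (cv c : ℝ) / N| ≤ D := by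
    intro c hc
    have := le_ciSup hbdd (⟨c, hc⟩ : Icc (0:ℝ) 1)
    rwa [hLeb _ hc, hEmpv] at this
  have hD0 : 0 ≤ D := le_trans (abs_nonneg _) (hDle 0 ⟨le_refl 0, zero_le_one⟩)
  -- main bound
  refine ciSup_le fun b => ?_
  rw [hIco _ b.2.1, hEmpx _]
  set c : ℝ := (μ (Iio (b:ℝ))).toReal with hc
  have hc01 : c ∈ Icc (0:ℝ) 1 := by
    constructor
    · exact ENNReal.toReal_nonneg
    · have := ENNReal.toReal_mono (measure_ne_top μ univ)
        (measure_mono (subset_univ (Iio (b:ℝ))))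
      simpa [measure_univ] using this
  have h1 : cv c ≤ cx (b:ℝ) := by
    apply Finset.card_le_card
    apply Finset.monotone_filter_right
    intro i _ hi
    exact claimI (b:ℝ) (v i) (hv i) b.2.2 hi
  have h2 : cx (b:ℝ) ≤ cv' c := by
    apply Finset.card_le_card
    apply Finset.monotone_filter_right
    intro i _ hi
    exact claimII (b:ℝ) (v i) (hv i) hi
  rw [abs_sub_le_iff]
  constructor
  · -- c - cx/N ≤ D
    have hd : (cv c : ℝ) / N ≤ (cx (b:ℝ) : ℝ) / N := by
      gcongr <;> exact_mod_cast h1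
    have := (le_abs_self (c - (cv c : ℝ) / N)).trans (hDle c hc01)
    linarith
  · -- cx/N - c ≤ D
    rcases eq_or_lt_of_le hc01.2 with hceq | hclt
    · have : (cx (b:ℝ) : ℝ) / N ≤ 1 := by
        rw [div_le_one hNpos]
        exact_mod_cast (Finset.card_filter_le _ _).trans (Finset.card_range N).le
      linarith
    · by_contra hcon
      push_neg at hcon
      set ε := ((cx (b:ℝ) : ℝ) / N - c - D) / 2 with hε
      have hεpos : 0 < ε := by
        simp only [hε]; linarith
      set c'' : ℝ := min (c + ε) 1 with hc''
      have hcc'' : c < c'' := lt_min (by linarith) hclt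
      have hc''01 : c'' ∈ Icc (0:ℝ) 1 := ⟨le_trans hc01.1 hcc''.le, min_le_right _ _⟩
      have h3 : cv' c ≤ cv c'' := by
        apply Finset.card_le_card
        apply Finset.monotone_filter_right
        intro i _ hi
        exact lt_of_le_of_lt hi hcc''
      have hd : (cx (b:ℝ) : ℝ) / N ≤ (cv c'' : ℝ) / N := by
        gcongr
        exact_mod_cast h2.trans h3
      have h4 : (cv c'' : ℝ) / N - c'' ≤ D := by
        have := (abs_sub_comm c'' ((cv c'' : ℝ) / N)) ▸ hDle c'' hc''01
        have h5 := le_abs_self ((cv c'' : ℝ) / N - c'')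
        rw [abs_sub_comm] at h5
        linarith [hDle c'' hc''01, le_abs_self ((cv c'' : ℝ) / N - c''),
          neg_abs_le (c'' - (cv c'' : ℝ) / N)]
      have h6 : c'' ≤ c + ε := min_le_left _ _
      simp only [hε] at hεpos ⊢
      linarith
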